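/- Let {S_{s,h} : s ∈ ℕ, 1 ≤ h ≤ 2^s} and {R_{s,h} : s ∈ ℕ, 1 ≤ h ≤ 2^s} be arbitrary numbers in [0,1], and let π_{s,h} be the multiscale stick-breaking weights built from them. For each leaf (N,h) at scale N define the remainder Δ_{N,h} = (1−S_{N,h}) · ∏_{r=0}^{N−1} (1−S_{r,a_r}) T_r, where a_r = ⌈h·2^{r−N}⌉ and T_r is the right/left split factor along the path to (N,h). Then for every N ∈ ℕ, ∑_{s=0}^{N} ∑_{h=1}^{2^s} π_{s,h} + ∑_{h=1}^{2^N} Δ_{N,h} = 1. -/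
import Mathlib


/-- The ancestor at scale `r ≤ s` of node `(s, h)`: the node `(r, ⌈h 2^(r-s)⌉)`. -/
def anc (s h r : ℕ) : ℕ := (h - 1) / 2 ^ (s - r) + 1

/-- Multiscale stick-breaking weight of node `(s, h)` built from the stopping probabilities `S`
and the right-turn probabilities `R`:
`π (s,h) = S (s,h) * ∏_{r<s} (1 - S (r, aᵣ)) * Tᵣ`, where `aᵣ` is the ancestor of `(s,h)` at
scale `r` and `Tᵣ = R (r, aᵣ)` if the path goes right at scale `r`, `1 - R (r, aᵣ)` otherwise. -/
noncomputable def msWeight (S R : ℕ → ℕ → ℝ) (s h : ℕ) : ℝ :=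
  S s h * ∏ r ∈ Finset.range s,
    ((1 - S r (anc s h r)) *
      (if anc s h (r + 1) = 2 * anc s h r then R r (anc s h r)
       else 1 - R r (anc s h r)))


noncomputable def Dfun (S R : ℕ → ℕ → ℝ) (s h : ℕ) : ℝ :=
  ∏ r ∈ Finset.range s,
    ((1 - S r (anc s h r)) *
      (if anc s h (r + 1) = 2 * anc s h r then R r (anc s h r)
       else 1 - R r (anc s h r)))

lemma anc_self (s h : ℕ) (hh : 1 ≤ h) : anc s h s = h := by
  simp [anc, Nat.sub_add_cancel hh]

lemma anc_succ (s h r : ℕ) (hr : r ≤ s) : anc (s+1) h r = anc s ((h-1)/2 + 1) r := by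
  simp only [anc, Nat.add_sub_cancel]
  rw [Nat.div_div_eq_div_mul]
  congr 2
  rw [Nat.succ_sub hr, pow_succ, Nat.mul_comm]

lemma D_left (S R : ℕ → ℕ → ℝ) (N k : ℕ) :
    Dfun S R (N+1) (2*k+1) = Dfun S R N (k+1) * ((1 - S N (k+1)) * (1 - R N (k+1))) := by
  have hpar : (2*k+1-1)/2 + 1 = k + 1 := by omega
  unfold Dfun
  rw [Finset.prod_range_succ]
  congr 1
  · apply Finset.prod_congr rfl
    intro r hr
    have hr' : r < N := Finset.mem_range.mp hr
    rw [anc_succ N (2*k+1) r (by omega), anc_succ N (2*k+1) (r+1) (by omega), hpar]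
  · rw [anc_self (N+1) (2*k+1) (by omega), anc_succ N (2*k+1) N le_rfl, hpar,
      anc_self N (k+1) (by omega)]
    rw [if_neg (by omega)]

lemma D_right (S R : ℕ → ℕ → ℝ) (N k : ℕ) :
    Dfun S R (N+1) (2*k+2) = Dfun S R N (k+1) * ((1 - S N (k+1)) * R N (k+1)) := by
  have hpar : (2*k+2-1)/2 + 1 = k + 1 := by omega
  unfold Dfun
  rw [Finset.prod_range_succ]
  congr 1
  · apply Finset.prod_congr rfl
    intro r hr
    have hr' : r < N := Finset.mem_range.mp hr
    rw [anc_succ N (2*k+2) r (by omega), anc_succ N (2*k+2) (r+1) (by omega), hpar]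
  · rw [anc_self (N+1) (2*k+2) (by omega), anc_succ N (2*k+2) N le_rfl, hpar,
      anc_self N (k+1) (by omega)]
    rw [if_pos (by omega)]

lemma sum_range_two_mul (m : ℕ) (g : ℕ → ℝ) :
    ∑ k ∈ Finset.range (2*m), g k = ∑ k ∈ Finset.range m, (g (2*k) + g (2*k+1)) := by
  induction m with
  | zero => simp
  | succ m ih =>
    have : 2 * (m+1) = (2*m + 1) + 1 := by ring
    rw [this, Finset.sum_range_succ, Finset.sum_range_succ, Finset.sum_range_succ, ih]
    ring

lemma sum_Icc_shift (m : ℕ) (f : ℕ → ℝ) :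
    ∑ h ∈ Finset.Icc 1 m, f h = ∑ k ∈ Finset.range m, f (k + 1) := by
  rw [← Finset.Ico_add_one_right_eq_Icc, Finset.sum_Ico_eq_sum_range]
  simp [Nat.add_comm]

lemma conserv (S R : ℕ → ℕ → ℝ) (N : ℕ) :
    ∑ s ∈ Finset.range (N + 1), ∑ h ∈ Finset.Icc 1 (2 ^ s), S s h * Dfun S R s h +
      ∑ h ∈ Finset.Icc 1 (2 ^ N), (1 - S N h) * Dfun S R N h = 1 := by
  induction N with
  | zero => simp [Dfun]
  | succ N ih =>
    have key : ∑ h ∈ Finset.Icc 1 (2 ^ (N+1)),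
          (S (N+1) h * Dfun S R (N+1) h + (1 - S (N+1) h) * Dfun S R (N+1) h)
        = ∑ h ∈ Finset.Icc 1 (2 ^ N), (1 - S N h) * Dfun S R N h := by
      rw [sum_Icc_shift, sum_Icc_shift]
      have h2 : 2 ^ (N+1) = 2 * 2 ^ N := by ring
      rw [h2, sum_range_two_mul]
      apply Finset.sum_congr rfl
      intro k _
      have e2 : 2*k+1+1 = 2*k+2 := by ring
      rw [e2, D_left, D_right]
      ring
    rw [Finset.sum_range_succ, add_assoc, ← Finset.sum_add_distrib, key]
    exact ih

/-- Deterministic conservation identity: for any stopping and right-turn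
probabilities in `[0,1]`, the multiscale stick-breaking weights up to scale `N` plus the
remainders `Δ (N,h) = (1 - S (N,h)) ∏_{r<N} (1 - S (r,aᵣ)) Tᵣ` at the leaves of scale `N`
sum to one. -/
theorem multiscale_stick_breaking_conservation
    (S R : ℕ → ℕ → ℝ)
    (hS : ∀ s h, S s h ∈ Set.Icc (0 : ℝ) 1) (hR : ∀ s h, R s h ∈ Set.Icc (0 : ℝ) 1)
    (N : ℕ) :
    ∑ s ∈ Finset.range (N + 1), ∑ h ∈ Finset.Icc 1 (2 ^ s), msWeight S R s h +
        ∑ h ∈ Finset.Icc 1 (2 ^ N),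
          ((1 - S N h) * ∏ r ∈ Finset.range N,
            ((1 - S r (anc N h r)) *
              (if anc N h (r + 1) = 2 * anc N h r then R r (anc N h r)
               else 1 - R r (anc N h r))))
      = 1 := conserv S R N
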